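/- Let φ1, φ2, X1, X2 be positive reals with φ1·X2 > φ2·X1 and 0 < 1 − √(φ1·X1·X2/φ2) < X2 (the interior of Case 2). Define, for τ ∈ (−φ2, φ1), π1(τ) = (1/2)·√(X1·(φ1 − τ)·(φ2 + τ)/X2) and π2(τ) = (φ2 + τ)·(1 − 1/(2·X2)) + (1/2)·√(X1·(φ1 − τ)·(φ2 + τ)/X2). Then there exists ε > 0 such that π1(τ) > π1(0) and π2(τ) > π2(0) for all τ ∈ (0, ε) if and only if φ2 < φ1 and (2 − 4·X2)·√(φ1·φ2) < (φ1 − φ2)·√(X1·X2). (Proposition 2.) -/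

import Mathlib

lemma aux_equiv (φ1 φ2 X1 X2 : ℝ)
    (hφ1 : 0 < φ1) (hφ2 : 0 < φ2) (hX1 : 0 < X1) (hX2 : 0 < X2) :
    (0 < X1 / X2 * (φ1 - φ2) + 4 * (1 - 1 / (2 * X2)) * Real.sqrt (X1 * φ1 * φ2 / X2)) ↔
      (2 - 4 * X2) * Real.sqrt (φ1 * φ2) < (φ1 - φ2) * Real.sqrt (X1 * X2) := by
  set u := Real.sqrt (X1 / X2) with hu_def
  set p := Real.sqrt (φ1 * φ2) with hp_def
  have hc : 0 < X1 / X2 := div_pos hX1 hX2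
  have hu : 0 < u := Real.sqrt_pos.mpr hc
  have hp : 0 < p := Real.sqrt_pos.mpr (mul_pos hφ1 hφ2)
  have h1 : Real.sqrt (X1 * φ1 * φ2 / X2) = u * p := by
    rw [show X1 * φ1 * φ2 / X2 = (X1 / X2) * (φ1 * φ2) by ring, Real.sqrt_mul hc.le]
  have h2 : Real.sqrt (X1 * X2) = u * X2 := by
    rw [show X1 * X2 = (X1 / X2) * X2 ^ 2 by field_simp, Real.sqrt_mul hc.le,
      Real.sqrt_sq hX2.le]
  have h3 : X1 / X2 = u ^ 2 := (Real.sq_sqrt hc.le).symm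
  have ha : 4 * (1 - 1 / (2 * X2)) * X2 = 4 * X2 - 2 := by field_simp; ring
  rw [h1, h2, h3]
  constructor <;> intro h
  · nlinarith [mul_pos hu hp, mul_pos hu hX2]
  · nlinarith [mul_pos hu hp, mul_pos hu hX2, mul_pos (mul_pos hu hp) hX2]

set_option maxHeartbeats 1000000 in
theorem case2_small_mutually_beneficial_iff (φ1 φ2 X1 X2 : ℝ)
    (hφ1 : 0 < φ1) (hφ2 : 0 < φ2) (hX1 : 0 < X1) (hX2 : 0 < X2)
    (hratio : φ1 * X2 > φ2 * X1)
    (hlo : 0 < 1 - Real.sqrt (φ1 * X1 * X2 / φ2))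
    (hhi : 1 - Real.sqrt (φ1 * X1 * X2 / φ2) < X2)
    (π1 π2 : ℝ → ℝ)
    (hπ1 : ∀ τ, π1 τ = (1 / 2) * Real.sqrt (X1 * (φ1 - τ) * (φ2 + τ) / X2))
    (hπ2 : ∀ τ, π2 τ = (φ2 + τ) * (1 - 1 / (2 * X2)) +
      (1 / 2) * Real.sqrt (X1 * (φ1 - τ) * (φ2 + τ) / X2)) :
    (∃ ε > 0, ∀ τ ∈ Set.Ioo (0 : ℝ) ε, π1 τ > π1 0 ∧ π2 τ > π2 0) ↔
      (φ2 < φ1 ∧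
        (2 - 4 * X2) * Real.sqrt (φ1 * φ2) < (φ1 - φ2) * Real.sqrt (X1 * X2)) := by
  have hc : 0 < X1 / X2 := div_pos hX1 hX2
  have hA0 : 0 < X1 * φ1 * φ2 / X2 := by positivity
  obtain ⟨s0, hs0_def⟩ : ∃ s, s = Real.sqrt (X1 * φ1 * φ2 / X2) := ⟨_, rfl⟩
  have hs0 : 0 < s0 := hs0_def ▸ Real.sqrt_pos.mpr hA0
  have hs0sq : s0 ^ 2 = X1 * φ1 * φ2 / X2 := hs0_def ▸ Real.sq_sqrt hA0.le
  constructor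
  · rintro ⟨ε, hε, H⟩
    have h12 : φ2 < φ1 := by
      by_contra hle
      push_neg at hle
      have h1 := (H (ε / 2) ⟨by linarith, by linarith⟩).1
      simp only [hπ1, sub_zero, add_zero] at h1
      rw [← hs0_def] at h1
      have hle2 : X1 * (φ1 - ε / 2) * (φ2 + ε / 2) / X2 ≤ X1 * φ1 * φ2 / X2 := by
        rw [div_le_div_iff₀ hX2 hX2]
        nlinarith [mul_nonneg (mul_nonneg (mul_pos hX1 hX2).le (by linarith : (0:ℝ) ≤ ε / 2))
            (by linarith : (0:ℝ) ≤ φ2 - φ1),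
          mul_nonneg (mul_nonneg (mul_pos hX1 hX2).le (by linarith : (0:ℝ) ≤ ε / 2))
            (by linarith : (0:ℝ) ≤ ε / 2)]
      have h3 := Real.sqrt_le_sqrt hle2
      rw [← hs0_def] at h3
      linarith
    refine ⟨h12, ?_⟩
    by_contra hB
    push_neg at hB
    have hK : X1 / X2 * (φ1 - φ2) + 4 * (1 - 1 / (2 * X2)) * s0 ≤ 0 := by
      by_contra hK'
      push_neg at hK'
      rw [hs0_def] at hK'
      exact absurd ((aux_equiv φ1 φ2 X1 X2 hφ1 hφ2 hX1 hX2).mp hK') (not_lt.mpr hB)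
    obtain ⟨τ, hτdef⟩ : ∃ t : ℝ, t = min (ε / 2) ((φ1 - φ2) / 2) := ⟨_, rfl⟩
    have hτ0 : 0 < τ := hτdef ▸ lt_min (by linarith) (by linarith)
    have hτε : τ < ε := by
      rw [hτdef]; exact lt_of_le_of_lt (min_le_left _ _) (by linarith)
    have hτφ : τ < φ1 - φ2 := by
      rw [hτdef]; exact lt_of_le_of_lt (min_le_right _ _) (by linarith)
    have h2 := (H τ ⟨hτ0, hτε⟩).2
    simp only [hπ2, sub_zero, add_zero] at h2
    rw [← hs0_def] at h2
    obtain ⟨sτ, hsτ_def⟩ : ∃ s, s = Real.sqrt (X1 * (φ1 - τ) * (φ2 + τ) / X2) := ⟨_, rfl⟩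
    rw [← hsτ_def] at h2
    have hAτ : 0 < X1 * (φ1 - τ) * (φ2 + τ) / X2 :=
      div_pos (mul_pos (mul_pos hX1 (by linarith)) (by linarith)) hX2
    have hsτsq : sτ ^ 2 = X1 * (φ1 - τ) * (φ2 + τ) / X2 := hsτ_def ▸ Real.sq_sqrt hAτ.le
    have hincr : s0 < sτ := by
      rw [hs0_def, hsτ_def]
      apply Real.sqrt_lt_sqrt hA0.le
      rw [div_lt_div_iff₀ hX2 hX2]
      nlinarith [mul_pos (mul_pos (mul_pos hX1 hX2) hτ0)
        (by linarith : (0:ℝ) < φ1 - φ2 - τ)]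
    have hE : (sτ - s0) * (sτ + s0) = X1 / X2 * τ * (φ1 - φ2) - X1 / X2 * (τ * τ) := by
      have h4 : sτ ^ 2 - s0 ^ 2 = X1 / X2 * τ * (φ1 - φ2) - X1 / X2 * (τ * τ) := by
        rw [hsτsq, hs0sq]; field_simp; ring
      linear_combination h4
    have h2' : 0 < τ * (1 - 1 / (2 * X2)) + (sτ - s0) / 2 := by linarith
    clear H hπ1 hπ2 hlo hhi hratio hB h2 hτdef hτε hsτ_def hs0_def
    nlinarith [hE, mul_pos (sub_pos.mpr hincr) (sub_pos.mpr hincr),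
      mul_pos hc (mul_pos hτ0 hτ0), mul_le_mul_of_nonneg_left hK hτ0.le,
      mul_pos hs0 h2']
  · rintro ⟨h12, hB⟩
    have hK0 : 0 < X1 / X2 * (φ1 - φ2) + 4 * (1 - 1 / (2 * X2)) * s0 := by
      rw [hs0_def]
      exact (aux_equiv φ1 φ2 X1 X2 hφ1 hφ2 hX1 hX2).mpr hB
    obtain ⟨a, ha⟩ : ∃ a : ℝ, a = 1 - 1 / (2 * X2) := ⟨_, rfl⟩
    rw [← ha] at hK0
    obtain ⟨K, hKdef⟩ : ∃ k : ℝ, k = s0 * (X1 / X2 * (φ1 - φ2)) + 4 * a * s0 ^ 2 := ⟨_, rfl⟩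
    obtain ⟨M, hMdef⟩ : ∃ m : ℝ, m = s0 * (X1 / X2) - a * (X1 / X2) * (φ1 - φ2) := ⟨_, rfl⟩
    have hKpos : 0 < K := by rw [hKdef]; nlinarith [mul_pos hs0 hK0]
    have hmax : (0:ℝ) < max M 1 := lt_of_lt_of_le one_pos (le_max_right _ _)
    refine ⟨min (φ1 - φ2) (K / max M 1),
      lt_min (by linarith) (div_pos hKpos hmax), fun τ hτ => ?_⟩
    obtain ⟨hτ0, hτε⟩ := hτ
    have hτφ : τ < φ1 - φ2 := lt_of_lt_of_le hτε (min_le_left _ _)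
    have hτM : τ * M < K := by
      have h1 : τ < K / max M 1 := lt_of_lt_of_le hτε (min_le_right _ _)
      have h2 : τ * max M 1 < K := (lt_div_iff₀ hmax).mp h1
      nlinarith [mul_le_mul_of_nonneg_left (le_max_left M 1) hτ0.le]
    have hAτ : 0 < X1 * (φ1 - τ) * (φ2 + τ) / X2 :=
      div_pos (mul_pos (mul_pos hX1 (by linarith)) (by linarith)) hX2
    obtain ⟨sτ, hsτ_def⟩ : ∃ s, s = Real.sqrt (X1 * (φ1 - τ) * (φ2 + τ) / X2) := ⟨_, rfl⟩
    have hsτsq : sτ ^ 2 = X1 * (φ1 - τ) * (φ2 + τ) / X2 := hsτ_def ▸ Real.sq_sqrt hAτ.le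
    have hincr : s0 < sτ := by
      rw [hs0_def, hsτ_def]
      apply Real.sqrt_lt_sqrt hA0.le
      rw [div_lt_div_iff₀ hX2 hX2]
      nlinarith [mul_pos (mul_pos (mul_pos hX1 hX2) hτ0)
        (by linarith : (0:ℝ) < φ1 - φ2 - τ)]
    have hE : s0 * ((sτ - s0) * (sτ + s0)) =
        s0 * (X1 / X2 * τ * (φ1 - φ2)) - s0 * (X1 / X2 * (τ * τ)) := by
      have h4 : sτ ^ 2 - s0 ^ 2 = X1 / X2 * τ * (φ1 - φ2) - X1 / X2 * (τ * τ) := by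
        rw [hsτsq, hs0sq]; field_simp; ring
      linear_combination s0 * h4
    have hunn : 0 ≤ X1 / X2 * τ * (φ1 - φ2) / (2 * s0) :=
      div_nonneg (mul_nonneg (mul_nonneg hc.le hτ0.le) (by linarith)) (by linarith)
    have hupper : sτ ≤ s0 + X1 / X2 * τ * (φ1 - φ2) / (2 * s0) := by
      have hexp : (s0 + X1 / X2 * τ * (φ1 - φ2) / (2 * s0)) ^ 2 =
          s0 ^ 2 + X1 / X2 * τ * (φ1 - φ2) + (X1 / X2 * τ * (φ1 - φ2) / (2 * s0)) ^ 2 := by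
        field_simp
        ring
      have h5 : X1 * (φ1 - τ) * (φ2 + τ) / X2 ≤
          (s0 + X1 / X2 * τ * (φ1 - φ2) / (2 * s0)) ^ 2 := by
        rw [hexp, hs0sq]
        have h6 : (0:ℝ) ≤ (X1 / X2 * τ * (φ1 - φ2) / (2 * s0)) ^ 2 := sq_nonneg _
        have h7 : 0 < X1 / X2 * (τ * τ) := mul_pos hc (mul_pos hτ0 hτ0)
        have h8 : X1 * (φ1 - τ) * (φ2 + τ) / X2 =
            X1 * φ1 * φ2 / X2 + X1 / X2 * τ * (φ1 - φ2) - X1 / X2 * (τ * τ) := by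
          field_simp
          ring
        linarith [h8.le]
      have h9 : sτ ≤ Real.sqrt ((s0 + X1 / X2 * τ * (φ1 - φ2) / (2 * s0)) ^ 2) := by
        rw [hsτ_def]; exact Real.sqrt_le_sqrt h5
      rwa [Real.sqrt_sq (by linarith)] at h9
    have hupper2 : 2 * s0 * sτ ≤ 2 * s0 ^ 2 + X1 / X2 * τ * (φ1 - φ2) := by
      have h9 : 2 * s0 * (X1 / X2 * τ * (φ1 - φ2) / (2 * s0)) = X1 / X2 * τ * (φ1 - φ2) := by
        field_simp
      nlinarith [mul_le_mul_of_nonneg_left hupper (by linarith : (0:ℝ) ≤ 2 * s0)]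
    have hpos2 : 0 < 2 * s0 ^ 2 + X1 / X2 * τ * (φ1 - φ2) / 2 := by
      have h10 : 0 ≤ X1 / X2 * τ * (φ1 - φ2) :=
        mul_nonneg (mul_nonneg hc.le hτ0.le) (by linarith)
      nlinarith [hs0]
    have hC : 0 < τ * (K - τ * M) := mul_pos hτ0 (by linarith)
    rw [hKdef, hMdef] at hC
    constructor
    · rw [hπ1]
      have h10 : π1 0 = 1 / 2 * s0 := by
        rw [hπ1, hs0_def]; norm_num
      rw [h10, ← hsτ_def]
      linarith
    · rw [hπ2]
      have h11 : π2 0 = φ2 * a + 1 / 2 * s0 := by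
        rw [hπ2, hs0_def, ha]; norm_num
      rw [h11, ← hsτ_def, ← ha]
      clear hπ1 hπ2 hlo hhi hratio hB h11 hsτ_def hs0_def hKdef hMdef hτM hKpos hK0 hmax hτε ha hupper
      nlinarith [hE, hC, hpos2, hupper2, sub_pos.mpr hincr, hs0, hτ0,
        mul_pos (sub_pos.mpr hincr) hpos2]
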